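/- Let X̃ ~ χ²_d (chi-squared with d degrees of freedom) and set X = X̃/d. Let Y be a {0,1}-valued random variable on the same probability space. If P(X > t) ≤ exp(−td/20) for all t ≥ 2, then E[XY] ≤ 2(P(Y = 1) + 11·exp(−d/10)). -/

import Mathlib

open MeasureTheory ProbabilityTheory

/-- Let `X̃ ~ χ²_d` (chi-squared, i.e. `Gamma(d/2, rate 1/2)`), `X = X̃/d`, and
let `Y` be `{0,1}`-valued on the same space. If `P(X > t) ≤ exp(−td/20)` for all `t ≥ 2`, then
`E[XY] ≤ 2(P(Y = 1) + 11 exp(−d/10))`. -/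
theorem chi_sq_times_indicator_bound
    {Ω : Type*} [MeasureSpace Ω] [IsProbabilityMeasure (ℙ : Measure Ω)]
    (d : ℕ) (hd : 1 ≤ d)
    (Xt : Ω → ℝ) (hXt : Measurable Xt)
    (hXtlaw : Measure.map Xt ℙ = gammaMeasure ((d : ℝ) / 2) (1 / 2))
    (X : Ω → ℝ) (hX : X = fun ω => Xt ω / d)
    (Y : Ω → ℝ) (hY : Measurable Y) (hY01 : ∀ᵐ ω ∂(ℙ : Measure Ω), Y ω = 0 ∨ Y ω = 1)
    (hXint : Integrable X ℙ)
    (htail : ∀ t : ℝ, 2 ≤ t → (ℙ : Measure Ω) {ω | X ω > t} ≤ ENNReal.ofReal (Real.exp (-(t * d / 20)))) :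
    ∫ ω, X ω * Y ω ∂ℙ
      ≤ 2 * (((ℙ : Measure Ω) {ω | Y ω = 1}).toReal + 11 * Real.exp (-(d : ℝ) / 10)) := by
  have hdpos : (0:ℝ) < d := by exact_mod_cast hd
  have hXm : Measurable X := by rw [hX]; exact hXt.div_const _
  set f : Ω → ℝ := fun ω => max (X ω - 2) 0 with hf_def
  have hf_nn : 0 ≤ᵐ[(ℙ : Measure Ω)] f := Filter.Eventually.of_forall fun ω => le_max_right _ _
  have hf_int : Integrable f ℙ := (hXint.sub (integrable_const 2)).pos_part
  have hY_int : Integrable Y ℙ := by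
    refine (integrable_const (1:ℝ)).mono' hY.aestronglyMeasurable ?_
    filter_upwards [hY01] with ω h
    rcases h with h | h <;> simp [h]
  have hXY_int : Integrable (fun ω => X ω * Y ω) ℙ := by
    refine hXint.abs.mono' (hXm.mul hY).aestronglyMeasurable ?_
    filter_upwards [hY01] with ω h
    rcases h with h | h <;> simp [h, abs_nonneg]
  -- pointwise bound X*Y ≤ 2*Y + f
  have hptwise : ∀ᵐ ω ∂(ℙ : Measure Ω), X ω * Y ω ≤ 2 * Y ω + f ω := by
    filter_upwards [hY01] with ω h
    rcases h with h | h
    · simp only [h, mul_zero, mul_one, zero_add]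
      exact le_max_right _ _
    · simp only [h, mul_one]
      rcases le_total (X ω) 2 with h2 | h2
      · have : (0:ℝ) ≤ f ω := le_max_right _ _
        linarith
      · have : X ω - 2 ≤ f ω := le_max_left _ _
        linarith
  have hsplit : ∫ ω, X ω * Y ω ∂ℙ ≤ 2 * ∫ ω, Y ω ∂ℙ + ∫ ω, f ω ∂ℙ := by
    calc ∫ ω, X ω * Y ω ∂ℙ ≤ ∫ ω, (2 * Y ω + f ω) ∂ℙ :=
          integral_mono_ae hXY_int ((hY_int.const_mul 2).add hf_int) hptwise
      _ = 2 * ∫ ω, Y ω ∂ℙ + ∫ ω, f ω ∂ℙ := by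
          rw [integral_add (hY_int.const_mul 2) hf_int, integral_const_mul]
  -- ∫ Y = P(Y = 1)
  have hYint_eq : ∫ ω, Y ω ∂ℙ = ((ℙ : Measure Ω) {ω | Y ω = 1}).toReal := by
    have hmeas : MeasurableSet {ω | Y ω = 1} := hY (measurableSet_singleton 1)
    have : Y =ᵐ[(ℙ : Measure Ω)] ({ω | Y ω = 1}).indicator (fun _ => (1:ℝ)) := by
      filter_upwards [hY01] with ω h
      rcases h with h | h
      · simp [Set.indicator, h]
      · simp [Set.indicator, h]
    rw [integral_congr_ae this, integral_indicator_const _ hmeas, smul_eq_mul, mul_one]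
    rfl
  -- layer cake for f
  have hlayer : ∫ ω, f ω ∂ℙ
      = ∫ t in Set.Ioi (0:ℝ), ((ℙ : Measure Ω) {a | t < f a}).toReal :=
    hf_int.integral_eq_integral_meas_lt hf_nn
  set G : ℝ → ℝ := fun t => ((ℙ : Measure Ω) {a | t < f a}).toReal with hG_def
  set g : ℝ → ℝ := fun t => Real.exp (-((d:ℝ)/20 * t)) * Real.exp (-(d:ℝ)/10) with hg_def
  have hGg : ∀ t ∈ Set.Ioi (0:ℝ), G t ≤ g t := by
    intro t ht
    have ht' : (0:ℝ) < t := ht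
    have hset : {a | t < f a} = {ω | X ω > t + 2} := by
      ext a
      simp only [Set.mem_setOf_eq, hf_def, lt_max_iff, gt_iff_lt]
      constructor
      · rintro (h | h)
        · linarith
        · linarith
      · intro h; left; linarith
    have htb : (ℙ : Measure Ω) {a | t < f a} ≤ ENNReal.ofReal (Real.exp (-((t+2) * d / 20))) := by
      rw [hset]; exact htail (t + 2) (by linarith)
    refine (ENNReal.toReal_le_of_le_ofReal (Real.exp_nonneg _) htb).trans (le_of_eq ?_)
    simp only [hg_def]
    rw [← Real.exp_add]
    congr 1
    ring
  have hG_nn : ∀ t, 0 ≤ G t := fun t => ENNReal.toReal_nonneg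
  have hG_anti : Antitone G := by
    intro s t hst
    exact ENNReal.toReal_mono (measure_ne_top _ _)
      (measure_mono fun a (ha : t < f a) => lt_of_le_of_lt hst ha)
  have hg_int : IntegrableOn g (Set.Ioi (0:ℝ)) := by
    have : IntegrableOn (fun t => Real.exp (-((d:ℝ)/20) * t)) (Set.Ioi (0:ℝ)) :=
      exp_neg_integrableOn_Ioi 0 (by positivity)
    simpa [hg_def, neg_mul, IntegrableOn] using this.mul_const (Real.exp (-(d:ℝ)/10))
  have hG_int : IntegrableOn G (Set.Ioi (0:ℝ)) := by
    refine hg_int.mono' (hG_anti.measurable.aestronglyMeasurable) ?_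
    rw [ae_restrict_iff' measurableSet_Ioi]
    filter_upwards with t ht
    rw [Real.norm_of_nonneg (hG_nn t)]
    exact hGg t ht
  have hGle : ∫ t in Set.Ioi (0:ℝ), G t ≤ ∫ t in Set.Ioi (0:ℝ), g t :=
    setIntegral_mono_on hG_int hg_int measurableSet_Ioi hGg
  have hgval : ∫ t in Set.Ioi (0:ℝ), g t = ((d:ℝ)/20)⁻¹ * Real.exp (-(d:ℝ)/10) := by
    simp only [hg_def]
    rw [integral_mul_const]
    have hb : (0:ℝ) < (d:ℝ)/20 := by positivity
    have := integral_comp_mul_left_Ioi (fun x => Real.exp (-x)) 0 hb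
    simp only [mul_zero, smul_eq_mul] at this
    rw [show (fun t : ℝ => Real.exp (-((d:ℝ)/20 * t))) = (fun t : ℝ => Real.exp (-((d:ℝ)/20 * t))) from rfl]
    calc (∫ t in Set.Ioi (0:ℝ), Real.exp (-((d:ℝ)/20 * t))) * Real.exp (-(d:ℝ)/10)
        = (((d:ℝ)/20)⁻¹ * ∫ x in Set.Ioi (0:ℝ), Real.exp (-x)) * Real.exp (-(d:ℝ)/10) := by
          rw [this]
      _ = ((d:ℝ)/20)⁻¹ * Real.exp (-(d:ℝ)/10) := by
          rw [integral_exp_neg_Ioi_zero]; ring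
  have hgle : ∫ t in Set.Ioi (0:ℝ), g t ≤ 20 * Real.exp (-(d:ℝ)/10) := by
    rw [hgval]
    have : ((d:ℝ)/20)⁻¹ ≤ 20 := by
      rw [inv_le_comm₀ (by positivity) (by norm_num)]
      calc (20:ℝ)⁻¹ ≤ 1/20 := by norm_num
        _ ≤ (d:ℝ)/20 := by gcongr; exact_mod_cast hd
    exact mul_le_mul_of_nonneg_right this (Real.exp_nonneg _)
  have hfinal : ∫ ω, f ω ∂ℙ ≤ 20 * Real.exp (-(d:ℝ)/10) := by
    rw [hlayer]; exact hGle.trans hgle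
  have hP_nn : (0:ℝ) ≤ ((ℙ : Measure Ω) {ω | Y ω = 1}).toReal := ENNReal.toReal_nonneg
  have hexp_nn : (0:ℝ) ≤ Real.exp (-(d:ℝ)/10) := Real.exp_nonneg _
  calc ∫ ω, X ω * Y ω ∂ℙ ≤ 2 * ∫ ω, Y ω ∂ℙ + ∫ ω, f ω ∂ℙ := hsplit
    _ ≤ 2 * ((ℙ : Measure Ω) {ω | Y ω = 1}).toReal + 20 * Real.exp (-(d:ℝ)/10) := by
        rw [hYint_eq]; linarith
    _ ≤ 2 * (((ℙ : Measure Ω) {ω | Y ω = 1}).toReal + 11 * Real.exp (-(d:ℝ)/10)) := by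
        linarith
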